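/- Consider a scheduling game with rank-based utilities on two machines with speeds r₁ = 1 and r₂ = r, where 0 < r < 1 and r is irrational, with unit jobs and arbitrary priority lists. Then the game admits a pure Nash equilibrium. -/
import Mathlib


open Finset
open scoped Classical

noncomputable section

variable {J M : Type*} [Fintype J]

/-- Completion time of job `j` in profile `s`: the total processing time of the jobs on
`j`'s machine that do not come after `j` in that machine's priority list, divided by the speed. -/
def Ctime (p : J → ℝ) (r : M → ℝ) (π : M → J → ℕ) (s : J → M) (j : J) : ℝ :=
  (∑ j' ∈ univ.filter (fun j' => s j' = s j ∧ π (s j) j' ≤ π (s j) j), p j') / r (s j)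

/-- Rank of job `j` in profile `s`. -/
def rankOf (p : J → ℝ) (r : M → ℝ) (π : M → J → ℕ) (s : J → M) (j : J) : ℝ :=
  ((univ.filter (fun j' => Ctime p r π s j' < Ctime p r π s j)).card : ℝ) +
    (((univ.filter (fun j' => Ctime p r π s j' = Ctime p r π s j)).card : ℝ) + 1) / 2

/-- The unilateral deviation of job `j` to machine `i` is beneficial. -/
def Beneficial (p : J → ℝ) (r : M → ℝ) (π : M → J → ℕ) (s : J → M) (j : J) (i : M) : Prop :=
  rankOf p r π (Function.update s j i) j < rankOf p r π s j ∨
    (rankOf p r π (Function.update s j i) j = rankOf p r π s j ∧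
      Ctime p r π (Function.update s j i) j < Ctime p r π s j)

/-- Pure Nash equilibrium: no job has a beneficial deviation. -/
def IsNE (p : J → ℝ) (r : M → ℝ) (π : M → J → ℕ) (s : J → M) : Prop :=
  ∀ j i, ¬ Beneficial p r π s j i

namespace IrrNE

/-- Number of machine-0 slots among the first `m` merged slots on two machines with
speeds `1` and `r`. -/
def A (r : ℝ) : ℕ → ℕ
  | 0 => 0
  | m+1 => A r m + if ((A r m : ℝ) + 1) * r < ((m - A r m : ℕ) : ℝ) + 1 then 1 else 0

/-- The `m`-th merged slot lies on machine 0. -/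
def cond (r : ℝ) (m : ℕ) : Prop :=
  ((A r m : ℝ) + 1) * r < ((m - A r m : ℕ) : ℝ) + 1

lemma A_succ (r : ℝ) (m : ℕ) :
    A r (m+1) = A r m + if cond r m then 1 else 0 := rfl

/-- Machine of the `m`-th merged slot (0-indexed). -/
def mach (r : ℝ) (m : ℕ) : Fin 2 := if cond r m then 0 else 1

/-- Value (completion time) of the `m`-th merged slot. -/
def slotVal (r : ℝ) (m : ℕ) : ℝ :=
  if cond r m then (A r m : ℝ) + 1 else (((m - A r m : ℕ) : ℝ) + 1) / r

lemma irr_ne (r : ℝ) (hirr : Irrational r) (a b : ℕ) :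
    ((a : ℝ) + 1) * r ≠ (b : ℝ) + 1 := by
  intro h
  apply hirr
  refine ⟨((b : ℚ) + 1) / ((a : ℚ) + 1), ?_⟩
  have ha : ((a : ℝ) + 1) ≠ 0 := by positivity
  push_cast
  field_simp
  linarith [h]

lemma invar (r : ℝ) (hr0 : 0 < r) (hirr : Irrational r) (m : ℕ) :
    A r m ≤ m ∧ (A r m : ℝ) * r < ((m - A r m : ℕ) : ℝ) + 1 ∧
      ((m - A r m : ℕ) : ℝ) < ((A r m : ℝ) + 1) * r := by
  induction m with
  | zero => simp [A]; positivity
  | succ m ih =>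
    obtain ⟨h1, h2, h3⟩ := ih
    by_cases hc : cond r m
    · have hc' := hc; unfold cond at hc'
      simp only [A_succ, if_pos hc]
      have hb : (m + 1 - (A r m + 1) : ℕ) = (m - A r m : ℕ) := by omega
      rw [hb]
      refine ⟨by omega, ?_, ?_⟩
      · push_cast; linarith
      · push_cast; nlinarith
    · have hc' := hc; unfold cond at hc'
      push_neg at hc'
      simp only [A_succ, if_neg hc, Nat.add_zero]
      have hb : (m + 1 - A r m : ℕ) = (m - A r m : ℕ) + 1 := by omega
      rw [hb]
      have hne := irr_ne r hirr (A r m) ((m - A r m : ℕ))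
      have hlt : ((m - A r m : ℕ) : ℝ) + 1 < ((A r m : ℝ) + 1) * r :=
        lt_of_le_of_ne hc' (fun h => hne h.symm)
      refine ⟨by omega, ?_, ?_⟩
      · push_cast; nlinarith
      · push_cast; linarith

lemma slotVal_strictMono (r : ℝ) (hr0 : 0 < r) (hirr : Irrational r) :
    StrictMono (slotVal r) := by
  apply strictMono_nat_of_lt_succ
  intro m
  obtain ⟨h1, h2, h3⟩ := invar r hr0 hirr m
  by_cases hc : cond r m
  · have hc' := hc; unfold cond at hc'
    have hA : A r (m+1) = A r m + 1 := by simp [A_succ, if_pos hc]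
    have hb : (m + 1 - (A r m + 1) : ℕ) = (m - A r m : ℕ) := by omega
    rw [slotVal, if_pos hc, slotVal, cond, hA, hb]
    by_cases hc2 : (((A r m + 1 : ℕ) : ℝ) + 1) * r < ((m - A r m : ℕ) : ℝ) + 1
    · rw [if_pos hc2]; push_cast; linarith
    · rw [if_neg hc2]
      rw [lt_div_iff₀ hr0]
      linarith
  · have hc' := hc; unfold cond at hc'
    push_neg at hc'
    have hne := irr_ne r hirr (A r m) ((m - A r m : ℕ))
    have hlt : ((m - A r m : ℕ) : ℝ) + 1 < ((A r m : ℝ) + 1) * r :=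
      lt_of_le_of_ne hc' (fun h => hne h.symm)
    have hA : A r (m+1) = A r m := by simp [A_succ, if_neg hc]
    have hb : (m + 1 - A r m : ℕ) = (m - A r m : ℕ) + 1 := by omega
    rw [slotVal, if_neg hc, slotVal, cond, hA, hb]
    by_cases hc2 : ((A r m : ℝ) + 1) * r < (((m - A r m : ℕ) + 1 : ℕ) : ℝ) + 1
    · rw [if_pos hc2]
      rw [div_lt_iff₀ hr0]
      linarith
    · rw [if_neg hc2]
      rw [div_lt_div_iff₀ hr0 hr0]
      push_cast
      nlinarith

lemma A_le (r : ℝ) (m : ℕ) : A r m ≤ m := by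
  induction m with
  | zero => simp [A]
  | succ m ih => rw [A_succ]; split <;> omega

/-- Number of machine-`i` slots among the first `m` merged slots. -/
def countMach (r : ℝ) (i : Fin 2) (m : ℕ) : ℕ :=
  ((Finset.range m).filter (fun m' => mach r m' = i)).card

lemma countMach_succ (r : ℝ) (i : Fin 2) (m : ℕ) :
    countMach r i (m+1) = countMach r i m + if mach r m = i then 1 else 0 := by
  unfold countMach
  rw [Finset.range_add_one, Finset.filter_insert]
  split
  · rw [Finset.card_insert_of_notMem (by simp)]
  · simp

lemma mach_eq_zero_iff (r : ℝ) (m : ℕ) : mach r m = 0 ↔ cond r m := by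
  unfold mach; split <;> simp_all

lemma mach_eq_one_iff (r : ℝ) (m : ℕ) : mach r m = 1 ↔ ¬ cond r m := by
  unfold mach; split <;> simp_all

lemma countMach_zero (r : ℝ) (m : ℕ) : countMach r 0 m = A r m := by
  induction m with
  | zero => simp [countMach, A]
  | succ m ih =>
    rw [countMach_succ, A_succ, ih]
    by_cases hc : cond r m
    · rw [if_pos ((mach_eq_zero_iff r m).mpr hc), if_pos hc]
    · rw [if_neg (fun h => hc ((mach_eq_zero_iff r m).mp h)), if_neg hc]

lemma countMach_one (r : ℝ) (m : ℕ) : countMach r 1 m = m - A r m := by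
  induction m with
  | zero => simp [countMach, A]
  | succ m ih =>
    have hle := A_le r m
    rw [countMach_succ, A_succ, ih]
    by_cases hc : cond r m
    · rw [if_neg (by rw [mach_eq_one_iff]; exact fun h => h hc), if_pos hc]
      omega
    · rw [if_pos ((mach_eq_one_iff r m).mpr hc), if_neg hc]
      omega

lemma speed_pos (r : ℝ) (hr0 : 0 < r) (i : Fin 2) : 0 < (![1, r] : Fin 2 → ℝ) i := by
  fin_cases i
  · norm_num
  · simpa using hr0

lemma slotVal_eq_count (r : ℝ) (m : ℕ) :
    slotVal r m = ((countMach r (mach r m) (m+1) : ℕ) : ℝ) / (![1, r] : Fin 2 → ℝ) (mach r m) := by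
  by_cases hc : cond r m
  · have hm : mach r m = 0 := (mach_eq_zero_iff r m).mpr hc
    rw [slotVal, if_pos hc, hm, countMach_zero, A_succ, if_pos hc]
    push_cast
    norm_num
  · have hm : mach r m = 1 := (mach_eq_one_iff r m).mpr hc
    have hle := A_le r m
    rw [slotVal, if_neg hc, hm, countMach_one, A_succ, if_neg hc]
    have : m + 1 - (A r m + 0) = (m - A r m) + 1 := by omega
    rw [this]
    push_cast
    norm_num

/-- Moving to the other machine lands strictly beyond the current slot value. -/
lemma deviate_gt (r : ℝ) (hr0 : 0 < r) (hirr : Irrational r) (m : ℕ) (i : Fin 2)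
    (hi : i ≠ mach r m) :
    slotVal r m < ((countMach r i m : ℝ) + 1) / (![1, r] : Fin 2 → ℝ) i := by
  obtain ⟨h1, h2, h3⟩ := invar r hr0 hirr m
  by_cases hc : cond r m
  · have hm : mach r m = 0 := (mach_eq_zero_iff r m).mpr hc
    have hi1 : i = 1 := by
      fin_cases i
      · exact absurd hm.symm hi
      · rfl
    have hc' := hc; unfold cond at hc'
    rw [slotVal, if_pos hc, hi1, countMach_one]
    have : (![1, r] : Fin 2 → ℝ) 1 = r := by norm_num
    rw [this, lt_div_iff₀ hr0]
    linarith
  · have hm : mach r m = 1 := (mach_eq_one_iff r m).mpr hc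
    have hi0 : i = 0 := by
      fin_cases i
      · rfl
      · exact absurd hm.symm hi
    have hc' := hc; unfold cond at hc'
    push_neg at hc'
    have hne := irr_ne r hirr (A r m) ((m - A r m : ℕ))
    have hlt : ((m - A r m : ℕ) : ℝ) + 1 < ((A r m : ℝ) + 1) * r :=
      lt_of_le_of_ne hc' (fun h => hne h.symm)
    rw [slotVal, if_neg hc, hi0, countMach_zero]
    have : (![1, r] : Fin 2 → ℝ) 0 = 1 := by norm_num
    rw [this, div_lt_iff₀ hr0, div_one]
    linarith

variable {n : ℕ}

/-- Remaining (unassigned) jobs after the first `m` greedy steps. -/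
def rem (r : ℝ) (π : Fin 2 → Fin n → ℕ) (hn : 0 < n) : ℕ → Finset (Fin n)
  | 0 => univ
  | m+1 => (rem r π hn m).erase
      (if h : (rem r π hn m).Nonempty then
        (Finset.exists_min_image (rem r π hn m) (π (mach r m)) h).choose
      else ⟨0, hn⟩)

/-- The job assigned at step `m`: the remaining job most preferred by the machine of
the `m`-th merged slot. -/
def pick (r : ℝ) (π : Fin 2 → Fin n → ℕ) (hn : 0 < n) (m : ℕ) : Fin n :=
  if h : (rem r π hn m).Nonempty then
    (Finset.exists_min_image (rem r π hn m) (π (mach r m)) h).choose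
  else ⟨0, hn⟩

lemma rem_succ (r : ℝ) (π : Fin 2 → Fin n → ℕ) (hn : 0 < n) (m : ℕ) :
    rem r π hn (m+1) = (rem r π hn m).erase (pick r π hn m) := rfl

lemma pick_mem (r : ℝ) (π : Fin 2 → Fin n → ℕ) (hn : 0 < n) (m : ℕ)
    (h : (rem r π hn m).Nonempty) : pick r π hn m ∈ rem r π hn m := by
  rw [pick, dif_pos h]
  exact (Finset.exists_min_image (rem r π hn m) (π (mach r m)) h).choose_spec.1

lemma pick_min (r : ℝ) (π : Fin 2 → Fin n → ℕ) (hn : 0 < n) (m : ℕ)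
    (h : (rem r π hn m).Nonempty) {j : Fin n} (hj : j ∈ rem r π hn m) :
    π (mach r m) (pick r π hn m) ≤ π (mach r m) j := by
  rw [pick, dif_pos h]
  exact (Finset.exists_min_image (rem r π hn m) (π (mach r m)) h).choose_spec.2 j hj

lemma rem_card (r : ℝ) (π : Fin 2 → Fin n → ℕ) (hn : 0 < n) :
    ∀ m, m ≤ n → (rem r π hn m).card = n - m := by
  intro m
  induction m with
  | zero => intro _; simp [rem]
  | succ m ih =>
    intro hm
    have hc : (rem r π hn m).card = n - m := ih (by omega)
    have hne : (rem r π hn m).Nonempty := by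
      rw [← Finset.card_pos, hc]; omega
    rw [rem_succ, Finset.card_erase_of_mem (pick_mem r π hn m hne), hc]
    omega

lemma rem_nonempty (r : ℝ) (π : Fin 2 → Fin n → ℕ) (hn : 0 < n) {m : ℕ}
    (hm : m < n) : (rem r π hn m).Nonempty := by
  rw [← Finset.card_pos, rem_card r π hn m (by omega)]; omega

lemma rem_subset (r : ℝ) (π : Fin 2 → Fin n → ℕ) (hn : 0 < n) {m m' : ℕ}
    (h : m ≤ m') : rem r π hn m' ⊆ rem r π hn m := by
  induction m' with
  | zero => rw [Nat.le_zero.mp h]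
  | succ m' ih =>
    rcases Nat.lt_or_ge m (m'+1) with h' | h'
    · exact (rem_succ r π hn m' ▸ Finset.erase_subset _ _).trans (ih (by omega))
    · have : m = m' + 1 := by omega
      rw [this]

lemma pick_lt (r : ℝ) (π : Fin 2 → Fin n → ℕ) (hn : 0 < n)
    (hπ : ∀ i, Function.Injective (π i)) {m m' : ℕ}
    (h : m < m') (h' : m' < n) :
    π (mach r m) (pick r π hn m) < π (mach r m) (pick r π hn m') := by
  have h1 : pick r π hn m' ∈ rem r π hn m' := pick_mem r π hn m' (rem_nonempty r π hn h')
  have h2 : pick r π hn m' ∈ rem r π hn (m+1) := rem_subset r π hn h h1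
  rw [rem_succ] at h2
  have h3 : pick r π hn m' ∈ rem r π hn m := Finset.mem_of_mem_erase h2
  have h4 : pick r π hn m' ≠ pick r π hn m := Finset.ne_of_mem_erase h2
  have h5 := pick_min r π hn m (rem_nonempty r π hn (by omega)) h3
  exact lt_of_le_of_ne h5 (fun he => h4 (hπ (mach r m) he).symm)

lemma pick_injOn (r : ℝ) (π : Fin 2 → Fin n → ℕ) (hn : 0 < n)
    (hπ : ∀ i, Function.Injective (π i)) {m m' : ℕ}
    (hm : m < n) (hm' : m' < n) (he : pick r π hn m = pick r π hn m') : m = m' := by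
  rcases Nat.lt_trichotomy m m' with h | h | h
  · exact absurd (he ▸ pick_lt r π hn hπ h hm') (lt_irrefl _)
  · exact h
  · exact absurd (he.symm ▸ pick_lt r π hn hπ h hm) (lt_irrefl _)

lemma pick_surj (r : ℝ) (π : Fin 2 → Fin n → ℕ) (hn : 0 < n)
    (hπ : ∀ i, Function.Injective (π i)) (j : Fin n) :
    ∃ m, m < n ∧ pick r π hn m = j := by
  have himg : (Finset.range n).image (pick r π hn) = univ := by
    apply Finset.eq_univ_of_card
    have hinj : Set.InjOn (pick r π hn) (Finset.range n) := fun a ha b hb hab =>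
      pick_injOn r π hn hπ (Finset.mem_range.mp ha) (Finset.mem_range.mp hb) hab
    rw [Finset.card_image_of_injOn hinj, Finset.card_range, Fintype.card_fin]
  have : j ∈ (Finset.range n).image (pick r π hn) := himg ▸ Finset.mem_univ j
  obtain ⟨m, hm, he⟩ := Finset.mem_image.mp this
  exact ⟨m, Finset.mem_range.mp hm, he⟩

lemma fin2_cases : ∀ (i i' x : Fin 2), i ≠ i' → x = i ∨ x = i' := by decide

lemma Ctime_card (rv : Fin 2 → ℝ) (π : Fin 2 → Fin n → ℕ) (s : Fin n → Fin 2)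
    (j : Fin n) :
    Ctime (fun _ => (1:ℝ)) rv π s j
      = ((univ.filter (fun j' => s j' = s j ∧ π (s j) j' ≤ π (s j) j)).card : ℝ) / rv (s j) := by
  rw [Ctime]
  norm_num
  congr 1
  norm_cast
  exact congrArg Finset.card (Finset.filter_congr_decidable _ _ _)

end IrrNE

/-- Two related machines with irrational speed ratio and unit jobs: a NE exists. -/
theorem irrational_NE_exists (n : ℕ) (r : ℝ) (hr0 : 0 < r) (hr1 : r < 1)
    (hirr : Irrational r)
    (π : Fin 2 → Fin n → ℕ) (hπ : ∀ i, Function.Injective (π i)) :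
    ∃ s : Fin n → Fin 2, IsNE (fun _ => (1:ℝ)) ![1, r] π s := by
  rcases Nat.eq_zero_or_pos n with hn | hn
  · subst hn
    exact ⟨fun j => j.elim0, fun j => j.elim0⟩
  obtain ⟨idx, hidxlt, hpidx⟩ :
      ∃ idx : Fin n → ℕ, (∀ j, idx j < n) ∧ (∀ j, IrrNE.pick r π hn (idx j) = j) := by
    choose idx h1 h2 using IrrNE.pick_surj r π hn hπ
    exact ⟨idx, h1, h2⟩
  have hidxp : ∀ m, m < n → idx (IrrNE.pick r π hn m) = m := fun m hm =>
    IrrNE.pick_injOn r π hn hπ (hidxlt _) hm (by rw [hpidx])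
  set s : Fin n → Fin 2 := fun j => IrrNE.mach r (idx j) with hs
  have hsj : ∀ j, s j = IrrNE.mach r (idx j) := fun j => rfl
  refine ⟨s, ?_⟩
  have hpinj : ∀ (t : Finset ℕ), (∀ m ∈ t, m < n) → Set.InjOn (IrrNE.pick r π hn) t :=
    fun t ht a ha b hb hab => IrrNE.pick_injOn r π hn hπ (ht a ha) (ht b hb) hab
  -- completion time of each job in `s` is the value of its slot
  have hCeq : ∀ j : Fin n, Ctime (fun _ => (1:ℝ)) ![1, r] π s j = IrrNE.slotVal r (idx j) := by
    intro j
    have hset : univ.filter (fun j' => s j' = s j ∧ π (s j) j' ≤ π (s j) j)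
        = ((Finset.range (idx j + 1)).filter (fun m' => IrrNE.mach r m' = s j)).image
            (IrrNE.pick r π hn) := by
      ext j'
      simp only [Finset.mem_filter, Finset.mem_univ, true_and, Finset.mem_image,
        Finset.mem_range]
      constructor
      · rintro ⟨hm, hle⟩
        refine ⟨idx j', ⟨?_, by rw [← hsj j']; exact hm⟩, hpidx j'⟩
        by_contra hgt
        push_neg at hgt
        have hlt := IrrNE.pick_lt r π hn hπ (show idx j < idx j' by omega) (hidxlt j')
        rw [hpidx, hpidx] at hlt
        rw [← hsj j] at hlt
        omega
      · rintro ⟨m', ⟨hm'lt, hm'eq⟩, rfl⟩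
        have hm'n : m' < n := lt_of_lt_of_le hm'lt (hidxlt j)
        constructor
        · rw [hsj, hidxp m' hm'n, hm'eq]
        · rcases Nat.lt_or_ge m' (idx j) with h | h
          · have hlt := IrrNE.pick_lt r π hn hπ h (hidxlt j)
            rw [hpidx j] at hlt
            rw [hm'eq] at hlt
            exact le_of_lt hlt
          · have : m' = idx j := by omega
            rw [this, hpidx j]
    rw [IrrNE.Ctime_card, hset]
    have hinj : Set.InjOn (IrrNE.pick r π hn)
        ((Finset.range (idx j + 1)).filter (fun m' => IrrNE.mach r m' = s j)) := by
      apply hpinj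
      intro m hm
      have h1 := Finset.mem_range.mp (Finset.mem_filter.mp hm).1
      have h2 := hidxlt j
      omega
    rw [Finset.card_image_of_injOn hinj]
    have hcm : ((Finset.range (idx j + 1)).filter (fun m' => IrrNE.mach r m' = s j)).card
        = IrrNE.countMach r (s j) (idx j + 1) := rfl
    rw [hcm, hsj j, ← IrrNE.slotVal_eq_count r (idx j)]
  -- rank of each job in `s` is its slot index + 1
  have hlt_iff : ∀ j' j : Fin n,
      (Ctime (fun _ => (1:ℝ)) ![1, r] π s j' < Ctime (fun _ => (1:ℝ)) ![1, r] π s j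
        ↔ idx j' < idx j) := by
    intro j' j
    rw [hCeq, hCeq]
    exact (IrrNE.slotVal_strictMono r hr0 hirr).lt_iff_lt
  have heq_iff : ∀ j' j : Fin n,
      (Ctime (fun _ => (1:ℝ)) ![1, r] π s j' = Ctime (fun _ => (1:ℝ)) ![1, r] π s j
        ↔ j' = j) := by
    intro j' j
    rw [hCeq, hCeq, (IrrNE.slotVal_strictMono r hr0 hirr).injective.eq_iff]
    constructor
    · intro h; rw [← hpidx j', ← hpidx j, h]
    · intro h; rw [h]
  have hrank : ∀ j : Fin n, rankOf (fun _ => (1:ℝ)) ![1, r] π s j = (idx j : ℝ) + 1 := by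
    intro j
    rw [rankOf]
    have h1 : univ.filter (fun j' => Ctime (fun _ => (1:ℝ)) ![1, r] π s j'
          < Ctime (fun _ => (1:ℝ)) ![1, r] π s j)
        = (Finset.range (idx j)).image (IrrNE.pick r π hn) := by
      ext j'
      simp only [Finset.mem_filter, Finset.mem_univ, true_and, Finset.mem_image,
        Finset.mem_range, hlt_iff]
      constructor
      · intro h; exact ⟨idx j', h, hpidx j'⟩
      · rintro ⟨m', hm', rfl⟩
        rw [hidxp m' (lt_trans hm' (hidxlt j))]
        exact hm'
    have h2 : univ.filter (fun j' => Ctime (fun _ => (1:ℝ)) ![1, r] π s j'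
          = Ctime (fun _ => (1:ℝ)) ![1, r] π s j) = {j} := by
      ext j'
      simp only [Finset.mem_filter, Finset.mem_univ, true_and, Finset.mem_singleton, heq_iff]
    rw [h1, h2, Finset.card_image_of_injOn (hpinj _ (fun m hm =>
      lt_trans (Finset.mem_range.mp hm) (hidxlt j))), Finset.card_range,
      Finset.card_singleton]
    norm_num
  -- Nash equilibrium
  intro j i hben
  simp only [Beneficial] at hben
  by_cases hij : i = s j
  · rw [hij] at hben
    have hupd : @Function.update _ _ (fun a b => Classical.propDecidable (a = b)) s j (s j)
        = s := @Function.update_eq_self _ _ (fun a b => Classical.propDecidable (a = b)) j s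
    rw [hupd] at hben
    rcases hben with h | ⟨_, h⟩ <;> exact lt_irrefl _ h
  · set s' : Fin n → Fin 2 :=
      @Function.update _ _ (fun a b => Classical.propDecidable (a = b)) s j i with hs'
    have hs'j : s' j = i := @Function.update_self _ _ (fun a b => Classical.propDecidable (a = b)) j i s
    have hs'ne : ∀ j' : Fin n, j' ≠ j → s' j' = s j' := fun j' h =>
      @Function.update_of_ne _ _ (fun a b => Classical.propDecidable (a = b)) _ _ h i s
    -- key fact: jobs placed earlier are preferred by their machine over `j`
    have hkey : ∀ j' : Fin n, idx j' < idx j →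
        π (s j') j' < π (s j') j := by
      intro j' h
      have hlt := IrrNE.pick_lt r π hn hπ h (hidxlt j)
      rw [hpidx, hpidx] at hlt
      rw [hsj j']
      exact hlt
    -- (b) the deviator's new completion time exceeds its old slot value
    have hb : IrrNE.slotVal r (idx j) < Ctime (fun _ => (1:ℝ)) ![1, r] π s' j := by
      rw [IrrNE.Ctime_card, hs'j]
      have hsub : insert j (((Finset.range (idx j)).filter
            (fun m' => IrrNE.mach r m' = i)).image (IrrNE.pick r π hn))
          ⊆ univ.filter (fun j' => s' j' = i ∧ π i j' ≤ π i j) := by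
        intro j'' hj''
        rcases Finset.mem_insert.mp hj'' with rfl | hj''
        · exact Finset.mem_filter.mpr ⟨Finset.mem_univ _, hs'j, le_refl _⟩
        · obtain ⟨m', hm', rfl⟩ := Finset.mem_image.mp hj''
          obtain ⟨hm'r, hm'eq⟩ := Finset.mem_filter.mp hm'
          have hm'lt : m' < idx j := Finset.mem_range.mp hm'r
          have hm'n : m' < n := lt_trans hm'lt (hidxlt j)
          have hne : IrrNE.pick r π hn m' ≠ j := by
            intro he
            have h := hidxp m' hm'n
            rw [he] at h
            omega
          refine Finset.mem_filter.mpr ⟨Finset.mem_univ _, ?_, ?_⟩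
          · rw [hs'ne _ hne, hsj _, hidxp m' hm'n, hm'eq]
          · have h := hkey (IrrNE.pick r π hn m') (by rw [hidxp m' hm'n]; exact hm'lt)
            rw [hsj _, hidxp m' hm'n, hm'eq] at h
            exact le_of_lt h
      have hjni : j ∉ ((Finset.range (idx j)).filter
          (fun m' => IrrNE.mach r m' = i)).image (IrrNE.pick r π hn) := by
        intro hmem
        obtain ⟨m', hm', he⟩ := Finset.mem_image.mp hmem
        have hm'lt := Finset.mem_range.mp (Finset.mem_filter.mp hm').1
        have : m' = idx j := by
          rw [← hidxp m' (lt_trans hm'lt (hidxlt j)), he]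
        omega
      have hcard : IrrNE.countMach r i (idx j) + 1
          ≤ (univ.filter (fun j' => s' j' = i ∧ π i j' ≤ π i j)).card := by
        have hceq : (insert j (((Finset.range (idx j)).filter
              (fun m' => IrrNE.mach r m' = i)).image (IrrNE.pick r π hn))).card
            = IrrNE.countMach r i (idx j) + 1 := by
          rw [Finset.card_insert_of_notMem hjni, Finset.card_image_of_injOn (hpinj _
            (fun m hm => lt_trans (Finset.mem_range.mp (Finset.mem_filter.mp hm).1)
              (hidxlt j)))]
          rfl
        rw [← hceq]
        exact Finset.card_le_card hsub
      have hgt := IrrNE.deviate_gt r hr0 hirr (idx j) i (by rw [← hsj j]; exact hij)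
      refine lt_of_lt_of_le hgt ?_
      apply (div_le_div_iff_of_pos_right (IrrNE.speed_pos r hr0 i)).mpr
      exact_mod_cast hcard
    -- (c) jobs of earlier slots still finish before the deviator
    have hcc : ∀ j' : Fin n, idx j' < idx j →
        Ctime (fun _ => (1:ℝ)) ![1, r] π s' j' < Ctime (fun _ => (1:ℝ)) ![1, r] π s' j := by
      intro j' hj'
      have hnej : j' ≠ j := by
        intro he; rw [he] at hj'; exact lt_irrefl _ hj'
      have hupper : Ctime (fun _ => (1:ℝ)) ![1, r] π s' j'
          ≤ Ctime (fun _ => (1:ℝ)) ![1, r] π s j' := by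
        rw [IrrNE.Ctime_card, IrrNE.Ctime_card, hs'ne j' hnej]
        apply (div_le_div_iff_of_pos_right (IrrNE.speed_pos r hr0 (s j'))).mpr
        have hsubc : univ.filter (fun j'' => s' j'' = s j' ∧ π (s j') j'' ≤ π (s j') j')
            ⊆ univ.filter (fun j'' => s j'' = s j' ∧ π (s j') j'' ≤ π (s j') j') := by
          intro j'' hj''
          obtain ⟨-, h1, h2⟩ := Finset.mem_filter.mp hj''
          have hne2 : j'' ≠ j := by
            intro he
            rw [he] at h2
            have := hkey j' hj'
            omega
          rw [hs'ne j'' hne2] at h1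
          exact Finset.mem_filter.mpr ⟨Finset.mem_univ _, h1, h2⟩
        exact_mod_cast Finset.card_le_card hsubc
      calc Ctime (fun _ => (1:ℝ)) ![1, r] π s' j'
          ≤ Ctime (fun _ => (1:ℝ)) ![1, r] π s j' := hupper
        _ = IrrNE.slotVal r (idx j') := hCeq j'
        _ < IrrNE.slotVal r (idx j) := IrrNE.slotVal_strictMono r hr0 hirr hj'
        _ < Ctime (fun _ => (1:ℝ)) ![1, r] π s' j := hb
    -- (d) the deviator's new rank is at least its old rank
    have hrk : (idx j : ℝ) + 1 ≤ rankOf (fun _ => (1:ℝ)) ![1, r] π s' j := by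
      rw [rankOf]
      have h1 : (Finset.range (idx j)).image (IrrNE.pick r π hn)
          ⊆ univ.filter (fun j' => Ctime (fun _ => (1:ℝ)) ![1, r] π s' j'
              < Ctime (fun _ => (1:ℝ)) ![1, r] π s' j) := by
        intro j'' hj''
        obtain ⟨m', hm', rfl⟩ := Finset.mem_image.mp hj''
        have hm'lt := Finset.mem_range.mp hm'
        refine Finset.mem_filter.mpr ⟨Finset.mem_univ _, ?_⟩
        exact hcc _ (by rw [hidxp m' (lt_trans hm'lt (hidxlt j))]; exact hm'lt)
      have hc1 : idx j ≤ (univ.filter (fun j' => Ctime (fun _ => (1:ℝ)) ![1, r] π s' j'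
          < Ctime (fun _ => (1:ℝ)) ![1, r] π s' j)).card := by
        have hcc1 := Finset.card_le_card h1
        rwa [Finset.card_image_of_injOn (hpinj _ (fun m hm =>
          lt_trans (Finset.mem_range.mp hm) (hidxlt j))), Finset.card_range] at hcc1
      have hc2 : 1 ≤ (univ.filter (fun j' => Ctime (fun _ => (1:ℝ)) ![1, r] π s' j'
          = Ctime (fun _ => (1:ℝ)) ![1, r] π s' j)).card :=
        Finset.card_pos.mpr ⟨j, Finset.mem_filter.mpr ⟨Finset.mem_univ _, rfl⟩⟩
      have hc1' : (idx j : ℝ) ≤ ((univ.filter (fun j' => Ctime (fun _ => (1:ℝ)) ![1, r] π s' j'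
          < Ctime (fun _ => (1:ℝ)) ![1, r] π s' j)).card : ℝ) := by exact_mod_cast hc1
      have hc2' : (1 : ℝ) ≤ ((univ.filter (fun j' => Ctime (fun _ => (1:ℝ)) ![1, r] π s' j'
          = Ctime (fun _ => (1:ℝ)) ![1, r] π s' j)).card : ℝ) := by exact_mod_cast hc2
      linarith
    -- conclude
    rcases hben with hlt | ⟨heq2, hlt2⟩
    · rw [hrank j] at hlt
      linarith
    · rw [hCeq j] at hlt2
      linarith
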